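/- Let p be a probability mass function on a finite type 𝒳 with p(x) > 0 for all x. Then there exists a prefix-free binary code c : 𝒳 → List Bool (for distinct x, y, c(x) is not a prefix of c(y)) whose expected codeword length satisfies Σ_x p(x)·|c(x)| < H(p) + 1, where H(p) is the Shannon entropy (base 2) of p. -/

import Mathlib

/-- Shannon entropy (base 2) of a pmf on a finite type. -/
noncomputable def shannonEntropyFin {𝒳 : Type*} [Fintype 𝒳] (p : 𝒳 → ℝ) : ℝ :=
  ∑ x, -(p x * Real.logb 2 (p x))

private lemma nat_interval_aux {a b d : ℕ} (hd : 0 < d) (h : a / d = b / d) :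
    b < a + d ∧ a < b + d := by
  have h1 := Nat.div_add_mod a d
  have h2 := Nat.div_add_mod b d
  have h3 : a % d < d := Nat.mod_lt _ hd
  have h4 : b % d < d := Nat.mod_lt _ hd
  rw [h] at h1
  omega

/-- Kraft inequality (integer form) implies existence of a prefix-free code with the
given codeword lengths. -/
private lemma kraft_to_code {𝒳 : Type*} [Fintype 𝒳] [DecidableEq 𝒳]
    (ℓ : 𝒳 → ℕ) (L : ℕ) (hL : ∀ x, ℓ x ≤ L)
    (hk : ∑ x, 2 ^ (L - ℓ x) ≤ 2 ^ L) :
    ∃ c : 𝒳 → List Bool,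
      (∀ x y : 𝒳, x ≠ y → ¬ c x <+: c y) ∧ (∀ x, (c x).length = ℓ x) := by
  classical
  set n := Fintype.card 𝒳 with hn
  set e := Fintype.equivFin 𝒳 with he
  set key : 𝒳 → ℕ := fun x => ℓ x * n + (e x : ℕ) with hkey
  have hen : ∀ x, (e x : ℕ) < n := fun x => (e x).isLt
  have key_inj : Function.Injective key := by
    intro x y hxy
    have hx := hen x
    have hy := hen y
    have hℓ : ℓ x = ℓ y := by
      rcases lt_trichotomy (ℓ x) (ℓ y) with h | h | h
      · exfalso; have : ℓ x * n + n ≤ ℓ y * n := by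
          calc ℓ x * n + n = (ℓ x + 1) * n := by ring
          _ ≤ ℓ y * n := Nat.mul_le_mul_right n h
        simp only [hkey] at hxy; omega
      · exact h
      · exfalso; have : ℓ y * n + n ≤ ℓ x * n := by
          calc ℓ y * n + n = (ℓ y + 1) * n := by ring
          _ ≤ ℓ x * n := Nat.mul_le_mul_right n h
        simp only [hkey] at hxy; omega
    have : (e x : ℕ) = (e y : ℕ) := by simp only [hkey, hℓ] at hxy; omega
    exact e.injective (Fin.ext this)
  have key_mono : ∀ {x y : 𝒳}, key y < key x → ℓ y ≤ ℓ x := by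
    intro x y h
    by_contra hc
    push_neg at hc
    have hx := hen x
    have : ℓ x * n + n ≤ ℓ y * n := by
      calc ℓ x * n + n = (ℓ x + 1) * n := by ring
      _ ≤ ℓ y * n := Nat.mul_le_mul_right n hc
    simp only [hkey] at h; omega
  set w : 𝒳 → ℕ := fun x => 2 ^ (L - ℓ x) with hw
  set N : 𝒳 → ℕ := fun x => ∑ y ∈ Finset.univ.filter (fun y => key y < key x), w y with hN
  have hw_pos : ∀ x, 0 < w x := fun x => Nat.pow_pos (by norm_num)
  -- N x + w x ≤ 2 ^ L
  have hNw : ∀ x, N x + w x ≤ 2 ^ L := by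
    intro x
    have hxmem : x ∉ Finset.univ.filter (fun y => key y < key x) := by simp
    have : N x + w x = ∑ y ∈ insert x (Finset.univ.filter (fun y => key y < key x)), w y := by
      rw [Finset.sum_insert hxmem]; ring
    rw [this]
    calc ∑ y ∈ insert x (Finset.univ.filter (fun y => key y < key x)), w y
        ≤ ∑ y, w y := Finset.sum_le_sum_of_subset (Finset.subset_univ _)
      _ ≤ 2 ^ L := hk
  have hNlt : ∀ x, N x < 2 ^ L := fun x => lt_of_lt_of_le (by have := hw_pos x; omega) (hNw x)
  -- monotonicity: key y < key x → N y + w y ≤ N x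
  have hsep : ∀ {x y : 𝒳}, key y < key x → N y + w y ≤ N x := by
    intro x y h
    have hymem : y ∉ Finset.univ.filter (fun z => key z < key y) := by simp
    have heq : N y + w y = ∑ z ∈ insert y (Finset.univ.filter (fun z => key z < key y)), w z := by
      rw [Finset.sum_insert hymem]; ring
    rw [heq]
    apply Finset.sum_le_sum_of_subset
    intro z hz
    simp only [Finset.mem_insert, Finset.mem_filter, Finset.mem_univ, true_and] at hz ⊢
    rcases hz with rfl | hz
    · exact h
    · exact lt_trans hz h
  -- the code
  refine ⟨fun x => (List.range (ℓ x)).map (fun i => Nat.testBit (N x) (L - 1 - i)), ?_, ?_⟩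
  swap
  · intro x; simp
  intro x y hxy hpre
  have hlen : ℓ x ≤ ℓ y := by
    have := hpre.length_le; simpa using this
  -- bit agreement in range [L - ℓ x, L)
  have hbit : ∀ j, L - ℓ x ≤ j → j < L → Nat.testBit (N x) j = Nat.testBit (N y) j := by
    intro j hj1 hj2
    have hLx := hL x
    have hLy := hL y
    set i := L - 1 - j with hi
    have hiℓ : i < ℓ x := by omega
    have hji : L - 1 - i = j := by omega
    have hget := hpre.getElem (i := i) (by simpa using hiℓ)
    simpa [hji] using hget
  -- equality of high-order quotients
  set d := 2 ^ (L - ℓ x) with hd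
  have hdiv_bit : ∀ (m j : ℕ), Nat.testBit (m / d) j = Nat.testBit m (j + (L - ℓ x)) := by
    intro m j
    simp [hd, Nat.testBit, Nat.shiftRight_eq_div_pow, Nat.div_div_eq_div_mul, pow_add, mul_comm]
  have hquot : N x / d = N y / d := by
    apply Nat.eq_of_testBit_eq
    intro j
    rw [hdiv_bit, hdiv_bit]
    by_cases hcase : j + (L - ℓ x) < L
    · exact hbit _ (by omega) hcase
    · rw [Nat.testBit_eq_false_of_lt, Nat.testBit_eq_false_of_lt]
      · exact lt_of_lt_of_le (hNlt y) (Nat.pow_le_pow_right (by norm_num) (by omega))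
      · exact lt_of_lt_of_le (hNlt x) (Nat.pow_le_pow_right (by norm_num) (by omega))
  have hdpos : 0 < d := Nat.pow_pos (by norm_num)
  obtain ⟨hlt1, hlt2⟩ := nat_interval_aux hdpos hquot
  -- hlt1 : N y < N x + d, hlt2 : N x < N y + d
  rcases lt_trichotomy (key x) (key y) with h | h | h
  · -- N y ≥ N x + w x
    have := hsep h
    have hwx : w x = d := rfl
    omega
  · exact hxy (key_inj h)
  · -- ℓ y ≤ ℓ x, so ℓ y = ℓ x, w y = d, and N x ≥ N y + d
    have hle := key_mono h
    have hℓeq : ℓ x = ℓ y := le_antisymm hlen hle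
    have := hsep h
    have hwy : w y = d := by simp [hw, hd, hℓeq]
    omega

/-- Source-coding achievability: if `p` is a pmf on a finite type `𝒳` with `p x > 0` for
all `x`, then there exists a prefix-free binary code `c : 𝒳 → List Bool` (for distinct
`x, y`, `c x` is not a prefix of `c y`) whose expected codeword length satisfies
`∑ₓ p(x)·|c(x)| < H(p) + 1`. -/
theorem exists_prefix_free_code_expected_length_lt_entropy_add_one
    {𝒳 : Type*} [Fintype 𝒳] (p : 𝒳 → ℝ)
    (hp_pos : ∀ x, 0 < p x) (hp_sum : ∑ x, p x = 1) :
    ∃ c : 𝒳 → List Bool,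
      (∀ x y : 𝒳, x ≠ y → ¬ c x <+: c y) ∧
      (∑ x, p x * ((c x).length : ℝ)) < shannonEntropyFin p + 1 := by
  classical
  rcases isEmpty_or_nonempty 𝒳 with hempty | hne
  · rw [Finset.univ_eq_empty, Finset.sum_empty] at hp_sum; norm_num at hp_sum
  set ℓ : 𝒳 → ℕ := fun x => ⌈-Real.logb 2 (p x)⌉₊ with hℓ
  set L : ℕ := Finset.univ.sup ℓ with hLdef
  have hL : ∀ x, ℓ x ≤ L := fun x => Finset.le_sup (Finset.mem_univ x)
  have hp_le_one : ∀ x, p x ≤ 1 := by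
    intro x
    rw [← hp_sum]
    exact Finset.single_le_sum (fun i _ => (hp_pos i).le) (Finset.mem_univ x)
  have hlogb_nonneg : ∀ x, 0 ≤ -Real.logb 2 (p x) := fun x =>
    neg_nonneg.mpr (Real.logb_nonpos one_lt_two (hp_pos x).le (hp_le_one x))
  -- per-symbol Kraft bound: 1 ≤ p x * 2 ^ ℓ x
  have hkraft1 : ∀ x, 1 ≤ p x * 2 ^ (ℓ x) := by
    intro x
    have hceil : -Real.logb 2 (p x) ≤ (ℓ x : ℝ) := Nat.le_ceil _
    have h1 : (2 : ℝ) ^ (-(ℓ x : ℝ)) ≤ 2 ^ Real.logb 2 (p x) := by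
      apply Real.rpow_le_rpow_of_exponent_le one_le_two
      linarith
    rw [Real.rpow_logb (by norm_num) (by norm_num) (hp_pos x)] at h1
    have h2 : (2 : ℝ) ^ (-(ℓ x : ℝ)) = ((2 : ℝ) ^ (ℓ x : ℕ))⁻¹ := by
      rw [Real.rpow_neg (by norm_num), Real.rpow_natCast]
    rw [h2] at h1
    have hpow : (0 : ℝ) < 2 ^ (ℓ x : ℕ) := by positivity
    rw [inv_le_iff_one_le_mul₀ hpow] at h1
    linarith [h1]
  -- Kraft inequality in ℕ
  have hkraftN : ∑ x, 2 ^ (L - ℓ x) ≤ 2 ^ L := by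
    have hreal : (∑ x, (2 : ℝ) ^ (L - ℓ x)) ≤ 2 ^ L := by
      have hterm : ∀ x ∈ Finset.univ, (2 : ℝ) ^ (L - ℓ x) ≤ p x * 2 ^ L := by
        intro x _
        have h1 := hkraft1 x
        have h2 : (2 : ℝ) ^ (L - ℓ x) * 2 ^ (ℓ x) = 2 ^ L := by
          have hLx := hL x; rw [← pow_add]; congr 1; omega
        have h3 : (2 : ℝ) ^ (L - ℓ x) * 1 ≤ 2 ^ (L - ℓ x) * (p x * 2 ^ (ℓ x)) := by
          apply mul_le_mul_of_nonneg_left h1 (by positivity)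
        calc (2 : ℝ) ^ (L - ℓ x) = 2 ^ (L - ℓ x) * 1 := by ring
          _ ≤ 2 ^ (L - ℓ x) * (p x * 2 ^ (ℓ x)) := h3
          _ = p x * (2 ^ (L - ℓ x) * 2 ^ (ℓ x)) := by ring
          _ = p x * 2 ^ L := by rw [h2]
      calc (∑ x, (2 : ℝ) ^ (L - ℓ x)) ≤ ∑ x, p x * 2 ^ L := Finset.sum_le_sum hterm
        _ = (∑ x, p x) * 2 ^ L := by rw [Finset.sum_mul]
        _ = 2 ^ L := by rw [hp_sum]; ring
    exact_mod_cast (by push_cast; exact hreal : ((∑ x, 2 ^ (L - ℓ x) : ℕ) : ℝ) ≤ ((2 ^ L : ℕ) : ℝ))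
  obtain ⟨c, hpf, hclen⟩ := kraft_to_code ℓ L hL hkraftN
  refine ⟨c, hpf, ?_⟩
  have hterm : ∀ x ∈ Finset.univ, p x * ((c x).length : ℝ) <
      -(p x * Real.logb 2 (p x)) + p x := by
    intro x _
    rw [hclen x]
    have hceil_lt : (ℓ x : ℝ) < -Real.logb 2 (p x) + 1 :=
      Nat.ceil_lt_add_one (hlogb_nonneg x)
    have := mul_lt_mul_of_pos_left hceil_lt (hp_pos x)
    calc p x * ((ℓ x : ℕ) : ℝ) < p x * (-Real.logb 2 (p x) + 1) := this
      _ = -(p x * Real.logb 2 (p x)) + p x := by ring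
  calc (∑ x, p x * ((c x).length : ℝ))
      < ∑ x, (-(p x * Real.logb 2 (p x)) + p x) :=
        Finset.sum_lt_sum_of_nonempty Finset.univ_nonempty hterm
    _ = shannonEntropyFin p + 1 := by
        rw [Finset.sum_add_distrib, hp_sum, shannonEntropyFin]
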